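/- Let E be a real normed vector space, x ∈ E, and k ≥ 1 an integer. Let r : E → ℝ be of class C^k on a neighborhood of x with Fréchet derivative Dr(x) ≠ 0, and let w : ℝ → ℝ be of class C^k on a neighborhood of r(x). If the iterated Fréchet derivatives of the composition u = w ∘ r satisfy D^l u(x) = 0 for all 1 ≤ l ≤ k, then w^{(l)}(r(x)) = 0 for all 1 ≤ l ≤ k, where w^{(l)} denotes the l-th derivative of w. -/

import Mathlib

open scoped Topology

/-- Euclidean version of Proposition 4.9: if `u = w ∘ r` has vanishing iterated Fréchet
derivatives up to order `k` at `x`, and `Dr(x) ≠ 0`, then the derivatives of `w` up to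
order `k` vanish at `r(x)`. -/
theorem deriv_vanish_of_comp_vanish {E : Type*} [NormedAddCommGroup E] [NormedSpace ℝ E]
    (x : E) (k : ℕ) (hk : 1 ≤ k) (r : E → ℝ) (w : ℝ → ℝ)
    (hr : ContDiffAt ℝ k r x) (hr' : fderiv ℝ r x ≠ 0)
    (hw : ContDiffAt ℝ k w (r x))
    (hu : ∀ l : ℕ, 1 ≤ l → l ≤ k → iteratedFDeriv ℝ l (w ∘ r) x = 0) :
    ∀ l : ℕ, 1 ≤ l → l ≤ k → iteratedDeriv l w (r x) = 0 := by
  classical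
  have hk1 : (k : WithTop ℕ∞) ≠ 0 := by exact_mod_cast (Nat.one_le_iff_ne_zero.mp hk)
  set u : E → ℝ := w ∘ r with hu_def
  have hU : ContDiffAt ℝ k u x := hw.comp x hr
  obtain ⟨v0, hv0⟩ : ∃ v0, fderiv ℝ r x v0 ≠ 0 := by
    by_contra h; push_neg at h; exact hr' (ContinuousLinearMap.ext h)
  set v : E := (fderiv ℝ r x v0)⁻¹ • v0 with hv_def
  have hv : fderiv ℝ r x v = 1 := by
    simp [hv_def, map_smul, inv_mul_cancel₀ hv0]
  set γ : ℝ → E := fun t ↦ x + t • v with hγ_def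
  have hγ : ContDiff ℝ k γ := contDiff_const.add (contDiff_id.smul contDiff_const)
  have hγ0 : γ 0 = x := by simp [hγ_def]
  set g : ℝ → ℝ := fun t ↦ r (γ t) with hg_def
  have hg : ContDiffAt ℝ k g 0 := (hγ0 ▸ hr).comp 0 hγ.contDiffAt
  -- g has derivative 1 at 0
  have hγd : HasDerivAt γ v 0 := by
    have h := ((hasDerivAt_id (0:ℝ)).smul_const v).const_add x; rw [one_smul] at h; exact h
  have hgd : HasDerivAt g 1 0 := by
    have hdr : HasFDerivAt r (fderiv ℝ r x) (γ 0) :=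
      hγ0.symm ▸ (hr.differentiableAt hk1).hasFDerivAt
    have := hdr.comp_hasDerivAt 0 hγd
    simp only [Function.comp_def, hγ0, hv] at this; exact this
  -- local inverse of g
  have hfd : HasFDerivAt g ((ContinuousLinearEquiv.refl ℝ ℝ :
      ℝ ≃L[ℝ] ℝ) : ℝ →L[ℝ] ℝ) 0 := by
    have : ((ContinuousLinearEquiv.refl ℝ ℝ : ℝ ≃L[ℝ] ℝ) : ℝ →L[ℝ] ℝ)
        = ContinuousLinearMap.smulRight (1 : ℝ →L[ℝ] ℝ) 1 := by ext; simp
    rw [this]; exact hgd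
  set φ : ℝ → ℝ := hg.localInverse hfd hk1 with hφ_def
  have hg0 : g 0 = r x := by rw [hg_def]; simp [hγ0]
  have hφc : ContDiffAt ℝ k φ (r x) := hg0 ▸ hg.to_localInverse hfd hk1
  have hφ0 : φ (r x) = 0 := hg0 ▸ hg.localInverse_apply_image hfd hk1
  have hri : ∀ᶠ y in 𝓝 (r x), g (φ y) = y := by
    have := (hg.hasStrictFDerivAt' hfd hk1).eventually_right_inverse
    rw [hg0] at this
    exact this
  -- σ : right inverse of r
  set σ : ℝ → E := fun s ↦ γ (φ s) with hσ_def
  have hσx : σ (r x) = x := by rw [hσ_def]; simp [hφ0, hγ0]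
  have hσc : ContDiffAt ℝ k σ (r x) := (hγ.contDiffAt (x := φ (r x))).comp (r x) hφc
  have hwu : (fun s ↦ u (σ s)) =ᶠ[𝓝 (r x)] w := by
    filter_upwards [hri] with y hy
    show w (r (γ (φ y))) = w y
    rw [show r (γ (φ y)) = g (φ y) from rfl, hy]
  -- Taylor series machinery
  obtain ⟨s₁, hs₁, hUs₁⟩ := hU.contDiffOn le_rfl (by simp)
  obtain ⟨s₀, hs₀s, hs₀o, hxs₀⟩ := mem_nhds_iff.1 hs₁
  have hUs₀ : ContDiffOn ℝ k u s₀ := hUs₁.mono hs₀s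
  obtain ⟨t₁, ht₁, hσt₁⟩ := hσc.contDiffOn le_rfl (by simp)
  obtain ⟨t₀, ht₀t, ht₀o, hxt₀⟩ := mem_nhds_iff.1 ht₁
  have hσt₀ : ContDiffOn ℝ k σ t₀ := hσt₁.mono ht₀t
  set t : Set ℝ := t₀ ∩ σ ⁻¹' s₀ with ht_def
  have hto : IsOpen t := hσt₀.continuousOn.isOpen_inter_preimage ht₀o hs₀o
  have hxt : r x ∈ t := ⟨hxt₀, by simp [Set.mem_preimage, hσx, hxs₀]⟩
  have hmaps : Set.MapsTo σ t s₀ := fun y hy ↦ hy.2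
  -- Taylor series
  have hp : HasFTaylorSeriesUpToOn k u (ftaylorSeriesWithin ℝ u s₀) s₀ :=
    hUs₀.ftaylorSeriesWithin hs₀o.uniqueDiffOn
  have hq : HasFTaylorSeriesUpToOn k σ (ftaylorSeriesWithin ℝ σ t₀) t :=
    (hσt₀.ftaylorSeriesWithin ht₀o.uniqueDiffOn).mono Set.inter_subset_left
  have hcomp : HasFTaylorSeriesUpToOn k (u ∘ σ)
      (fun y ↦ ((ftaylorSeriesWithin ℝ u s₀) (σ y)).taylorComp
        ((ftaylorSeriesWithin ℝ σ t₀) y)) t := hp.comp hq hmaps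
  intro l hl1 hlk
  have hlk' : (l : WithTop ℕ∞) ≤ k := by exact_mod_cast hlk
  have key : iteratedFDerivWithin ℝ l (u ∘ σ) t (r x) = 0 := by
    rw [← hcomp.eq_iteratedFDerivWithin_of_uniqueDiffOn hlk' hto.uniqueDiffOn hxt]
    show ∑ c : OrderedFinpartition l, _ = 0
    apply Finset.sum_eq_zero
    intro c _
    have hlen1 : 0 < c.length := c.length_pos (lt_of_lt_of_le Nat.zero_lt_one hl1)
    have hlenk : c.length ≤ k := le_trans c.length_le hlk
    have hz : (ftaylorSeriesWithin ℝ u s₀) (σ (r x)) c.length = 0 := by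
      rw [hσx]
      have : iteratedFDerivWithin ℝ c.length u s₀ x = iteratedFDeriv ℝ c.length u x :=
        iteratedFDerivWithin_of_isOpen c.length hs₀o hxs₀
      show iteratedFDerivWithin ℝ c.length u s₀ x = 0
      rw [this]
      exact hu c.length hlen1 hlenk
    ext y
    simp [FormalMultilinearSeries.compAlongOrderedFinpartition_apply, hz]
  have key2 : iteratedDeriv l (u ∘ σ) (r x) = 0 := by
    rw [iteratedDeriv_eq_iteratedFDeriv,
      ← iteratedFDerivWithin_of_isOpen l hto hxt, key]
    simp
  calc iteratedDeriv l w (r x) = iteratedDeriv l (u ∘ σ) (r x) :=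
        Filter.EventuallyEq.iteratedDeriv_eq l hwu.symm
    _ = 0 := key2
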